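/- arXiv:1405.1276 — 2 statements merged into one kernel-verified Lean document; each statement's English description precedes it below -/
import Mathlib

section
/- Let λ₂ be a Borel probability measure on E₂ written as a convolution λ₂ = Tλ₁ * ρ, where T : E₁ → E₂ is Borel measurable and ρ is a Borel probability measure on E₂. Then for each 1 ≤ p < ∞, the operator P_T defined by (P_T f)(x) = ∫_{E₂} f(Tx + y) dρ(y) is a linear contraction from L^p(E₂, λ₂) to L^p(E₁, λ₁). -/
open MeasureTheory ENNReal

/-- Convolution of two Borel measures: pushforward of the product under addition. -/
noncomputable def mconv {E : Type*} [MeasurableSpace E] [Add E]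
    (μ ν : Measure E) : Measure E :=
  (μ.prod ν).map (fun p => p.1 + p.2)

/-- If `T l₁ * ρ = l₂`, then for `1 ≤ p < ∞` the operator
`P_T f (x) = ∫ f (T x + y) dρ(y)` is a linear contraction from
`L^p(E₂, l₂)` to `L^p(E₁, l₁)`. -/
theorem skew_transition_contraction
    {E₁ E₂ : Type*}
    [NormedAddCommGroup E₁] [NormedSpace ℝ E₁] [CompleteSpace E₁]
    [MeasurableSpace E₁] [BorelSpace E₁]
    [NormedAddCommGroup E₂] [NormedSpace ℝ E₂] [CompleteSpace E₂]
    [MeasurableSpace E₂] [BorelSpace E₂]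
    (l₁ : Measure E₁) (l₂ ρ : Measure E₂)
    [IsProbabilityMeasure l₁] [IsProbabilityMeasure l₂] [IsProbabilityMeasure ρ]
    (T : E₁ → E₂) (hT : Measurable T)
    (hskew : mconv (l₁.map T) ρ = l₂)
    (p : ℝ≥0∞) (hp : 1 ≤ p) (hp' : p ≠ ∞)
    (f : E₂ → ℝ) (hf : Measurable f) (hfp : MemLp f p l₂) :
    MemLp (fun x => ∫ y, f (T x + y) ∂ρ) p l₁ ∧
      eLpNorm (fun x => ∫ y, f (T x + y) ∂ρ) p l₁ ≤ eLpNorm f p l₂ ∧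
      (∀ (g : E₂ → ℝ), Measurable g → MemLp g p l₂ → ∀ (a : ℝ),
        ∀ᵐ x ∂l₁, (∫ y, (a • f + g) (T x + y) ∂ρ)
          = a * (∫ y, f (T x + y) ∂ρ) + ∫ y, g (T x + y) ∂ρ) := by
  have hp0 : p ≠ 0 := fun h => by simp [h] at hp
  have hprpos : 0 < p.toReal := ENNReal.toReal_pos hp0 hp'
  have hpr0 : p.toReal ≠ 0 := hprpos.ne'
  -- the addition map must be a.e. measurable, otherwise `mconv` is the zero measure
  have hadd : AEMeasurable (fun q : E₂ × E₂ => q.1 + q.2) ((l₁.map T).prod ρ) := by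
    by_contra h
    have h0 := hskew
    rw [mconv, Measure.map_of_not_aemeasurable h] at h0
    have : (0 : Measure E₂) Set.univ = l₂ Set.univ := by rw [h0]
    simp [measure_univ] at this
  have hprod : (l₁.map T).prod ρ = (l₁.prod ρ).map (Prod.map T id) := by
    have := Measure.map_prod_map (f := T) (g := (id : E₂ → E₂)) l₁ ρ hT measurable_id
    simpa using this
  have hadd' : AEMeasurable (fun q : E₂ × E₂ => q.1 + q.2)
      ((l₁.prod ρ).map (Prod.map T id)) := hprod ▸ hadd
  have hS : AEMeasurable (fun q : E₁ × E₂ => T q.1 + q.2) (l₁.prod ρ) := by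
    have := hadd'.comp_measurable (hT.prodMap measurable_id)
    exact this
  have hl2 : l₂ = (l₁.prod ρ).map (fun q : E₁ × E₂ => T q.1 + q.2) := by
    rw [← hskew, mconv, hprod,
      AEMeasurable.map_map_of_aemeasurable hadd' (hT.prodMap measurable_id).aemeasurable]
    rfl
  -- the key change-of-variables identity for lintegrals
  have key : ∀ (F : E₂ → ℝ≥0∞), Measurable F →
      ∫⁻ z, F z ∂l₂ = ∫⁻ x, ∫⁻ y, F (T x + y) ∂ρ ∂l₁ := by
    intro F hF
    rw [hl2, lintegral_map' hF.aemeasurable hS]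
    exact lintegral_prod _ (hF.comp_aemeasurable hS)
  -- a.e.-strong measurability of the averaged function
  have hmeas : AEStronglyMeasurable (fun x => ∫ y, f (T x + y) ∂ρ) l₁ :=
    AEStronglyMeasurable.integral_prod_right'
      (f := fun q : E₁ × E₂ => f (T q.1 + q.2)) (hf.comp_aemeasurable hS).aestronglyMeasurable
  -- pointwise Jensen: ‖∫ f(Tx+y) dρ‖ₑ^p ≤ ∫⁻ ‖f(Tx+y)‖ₑ^p dρ
  have jensen : ∀ (h : E₂ → ℝ), Measurable h → ∀ x : E₁,
      (‖∫ y, h (T x + y) ∂ρ‖₊ : ℝ≥0∞) ^ p.toReal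
        ≤ ∫⁻ y, (‖h (T x + y)‖₊ : ℝ≥0∞) ^ p.toReal ∂ρ := by
    intro h hh x
    have hhx : Measurable fun y => h (T x + y) := hh.comp (measurable_const_add (T x))
    have h1 : (‖∫ y, h (T x + y) ∂ρ‖₊ : ℝ≥0∞) ≤ eLpNorm (fun y => h (T x + y)) 1 ρ := by
      rw [eLpNorm_one_eq_lintegral_enorm]
      exact enorm_integral_le_lintegral_enorm _
    have h2 : eLpNorm (fun y => h (T x + y)) 1 ρ ≤ eLpNorm (fun y => h (T x + y)) p ρ :=
      eLpNorm_le_eLpNorm_of_exponent_le hp hhx.aestronglyMeasurable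
    have h3 := h1.trans h2
    calc (‖∫ y, h (T x + y) ∂ρ‖₊ : ℝ≥0∞) ^ p.toReal
        ≤ (eLpNorm (fun y => h (T x + y)) p ρ) ^ p.toReal :=
          ENNReal.rpow_le_rpow h3 hprpos.le
      _ = ∫⁻ y, (‖h (T x + y)‖₊ : ℝ≥0∞) ^ p.toReal ∂ρ := by
          rw [eLpNorm_eq_lintegral_rpow_enorm_toReal hp0 hp', ← ENNReal.rpow_mul, one_div,
            inv_mul_cancel₀ hpr0, ENNReal.rpow_one]
          rfl
  -- the main norm inequality
  have hle : eLpNorm (fun x => ∫ y, f (T x + y) ∂ρ) p l₁ ≤ eLpNorm f p l₂ := by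
    rw [eLpNorm_eq_lintegral_rpow_enorm_toReal hp0 hp', eLpNorm_eq_lintegral_rpow_enorm_toReal hp0 hp']
    apply ENNReal.rpow_le_rpow _ (by positivity)
    rw [key (fun z => ‖f z‖ₑ ^ p.toReal) (hf.enorm.pow_const _)]
    exact lintegral_mono fun x => jensen f hf x
  have hmem : MemLp (fun x => ∫ y, f (T x + y) ∂ρ) p l₁ :=
    ⟨hmeas, lt_of_le_of_lt hle hfp.2⟩
  refine ⟨hmem, hle, ?_⟩
  -- a.e. integrability of the fibers
  have hint : ∀ (h : E₂ → ℝ), Measurable h → MemLp h p l₂ →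
      ∀ᵐ x ∂l₁, Integrable (fun y => h (T x + y)) ρ := by
    intro h hh hhp
    set G : E₁ × E₂ → ℝ≥0∞ := fun q => (‖h (T q.1 + q.2)‖₊ : ℝ≥0∞) ^ p.toReal with hGdef
    have hG : AEMeasurable G (l₁.prod ρ) :=
      (hh.enorm.pow_const p.toReal).comp_aemeasurable hS
    have hfin : ∫⁻ x, ∫⁻ y, G (x, y) ∂ρ ∂l₁ < ∞ := by
      have hkey := key (fun z => (‖h z‖₊ : ℝ≥0∞) ^ p.toReal) (hh.enorm.pow_const _)
      rw [← hkey]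
      have h2 := hhp.2
      rw [eLpNorm_eq_lintegral_rpow_enorm_toReal hp0 hp'] at h2
      exact (ENNReal.rpow_lt_top_iff_of_pos (one_div_pos.2 hprpos)).1 h2
    have h1 : Measurable fun x => ∫⁻ y, hG.mk G (x, y) ∂ρ :=
      hG.measurable_mk.lintegral_prod_right'
    have h2 : ∀ᵐ x ∂l₁, ∫⁻ y, hG.mk G (x, y) ∂ρ = ∫⁻ y, G (x, y) ∂ρ := by
      filter_upwards [Measure.ae_ae_of_ae_prod hG.ae_eq_mk] with x hx
      exact (lintegral_congr_ae hx).symm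
    have haem : AEMeasurable (fun x => ∫⁻ y, G (x, y) ∂ρ) l₁ :=
      h1.aemeasurable.congr h2
    have hae := ae_lt_top' haem hfin.ne
    filter_upwards [hae] with x hx
    have hmemx : MemLp (fun y => h (T x + y)) p ρ := by
      refine ⟨(hh.comp (measurable_const_add (T x))).aestronglyMeasurable, ?_⟩
      rw [eLpNorm_eq_lintegral_rpow_enorm_toReal hp0 hp']
      exact ENNReal.rpow_lt_top_of_nonneg (by positivity) (by have := hx.ne; simp only [hGdef] at this; exact this)
    exact hmemx.integrable hp
  intro g hg hgp a
  filter_upwards [hint f hf hfp, hint g hg hgp] with x hfx hgx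
  have heq : (fun y => (a • f + g) (T x + y)) = fun y => a * f (T x + y) + g (T x + y) := by
    funext y; simp [mul_comm]
  rw [heq, integral_add (hfx.const_mul a) hgx, integral_const_mul]
end

section
/- For the signed measure ν = 2δ₁ + 2δ₂ − δ₃ + 2δ₄ + 2δ₅ on ℤ, the convolution square ν*² equals 4δ₂ + 8δ₃ + 4δ₅ + 17δ₆ + 4δ₇ + 8δ₉ + 4δ₁₀, and in particular ν*² is a non-negative measure. -/
open AddMonoidAlgebra

noncomputable def nuR : AddMonoidAlgebra ℝ ℤ :=
  single 1 2 + single 2 2 - single 3 1 + single 4 2 + single 5 2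

/-- `ν*² = 4δ₂ + 8δ₃ + 4δ₅ + 17δ₆ + 4δ₇ + 8δ₉ + 4δ₁₀`, and in particular the
convolution square `ν*²` is non-negative. -/
theorem nu_conv_sq :
    nuR * nuR
      = single 2 4 + single 3 8 + single 5 4 + single 6 17 + single 7 4
        + single 9 8 + single 10 4
    ∧ ∀ n : ℤ, 0 ≤ (nuR * nuR).coeff n := by
  have h : nuR * nuR
      = single 2 4 + single 3 8 + single 5 4 + single 6 17 + single 7 4
        + single 9 8 + single 10 4 := by
    simp only [nuR, mul_add, add_mul, sub_mul, mul_sub, single_mul_single]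
    norm_num
    simp only [map_ofNat]
    ring
  refine ⟨h, fun n => ?_⟩
  rw [h]
  have key : ∀ (f g : AddMonoidAlgebra ℝ ℤ) (m : ℤ), (f + g).coeff m = f.coeff m + g.coeff m :=
    fun f g m => Finsupp.add_apply f.coeff g.coeff m
  simp only [key, AddMonoidAlgebra.coeff_single_apply]
  split_ifs <;> norm_num
end
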